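/- Let p ∈ (1,∞), let A ⊆ L(L^p(μ)) with isometric automorphism φ_A, let φ_A^∞ and u_ℤ be the operators on L^p(ν×μ) defined above. Then for all a ∈ A: (1) for n ≥ 0, u_ℤ(n)φ_A^∞(a)u_ℤ(−n) = φ_A^∞(φ_A^n(a)); (2) for n ≥ 1, u_ℤ(−n)φ_A^∞(a)u_ℤ(n) = φ_A^∞(φ_A^{−n}(a)) − Σ_{k=0}^{n−1} θ_{δ_k,δ_k} ⊗ φ_A^{k−n}(a). -/
import Mathlib


open MeasureTheory
open scoped ENNReal

/-- With `φ_A^∞` the diagonal operator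
`(φ_A^∞(a)ξ)_k = φ_A^k(a)(ξ_k)` and `u_ℤ(n)` the translation operators on
`ℓ^p(ℤ_{≥0}) ⊗_p L^p(μ)` (realized as a `p`-direct sum), one has for `a ∈ A`:
(1) for `n ≥ 0`, `u_ℤ(n) φ_A^∞(a) u_ℤ(−n) = φ_A^∞(φ_A^n(a))`;
(2) for `n ≥ 1`,
`u_ℤ(−n) φ_A^∞(a) u_ℤ(n) = φ_A^∞(φ_A^{−n}(a)) − Σ_{k=0}^{n−1} θ_{δ_k,δ_k} ⊗ φ_A^{k−n}(a)`. -/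
theorem translation_conjugation_of_phi_infinity
    {Ω : Type*} [MeasurableSpace Ω] (μ : Measure Ω)
    (p : ℝ≥0∞) [Fact (1 ≤ p)] (hp : 1 < p) (hp' : p ≠ ∞)
    (A : Set (Lp ℂ p μ →L[ℂ] Lp ℂ p μ))
    (φ ψ : (Lp ℂ p μ →L[ℂ] Lp ℂ p μ) → (Lp ℂ p μ →L[ℂ] Lp ℂ p μ))
    (hφA : ∀ a ∈ A, φ a ∈ A) (hψA : ∀ a ∈ A, ψ a ∈ A)
    (hφ_iso : ∀ a ∈ A, ‖φ a‖ = ‖a‖)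
    (hφψ : ∀ a ∈ A, φ (ψ a) = a) (hψφ : ∀ a ∈ A, ψ (φ a) = a)
    (Φ : (Lp ℂ p μ →L[ℂ] Lp ℂ p μ) →
        (lp (fun _ : ℕ => Lp ℂ p μ) p →L[ℂ] lp (fun _ : ℕ => Lp ℂ p μ) p))
    (hΦ : ∀ a ∈ A, ∀ (ξ : lp (fun _ : ℕ => Lp ℂ p μ) p) (k : ℕ),
      (Φ a ξ) k = (φ^[k] a) (ξ k))
    (U : ℤ → (lp (fun _ : ℕ => Lp ℂ p μ) p →L[ℂ] lp (fun _ : ℕ => Lp ℂ p μ) p))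
    (hU_pos : ∀ (n : ℕ) (ξ : lp (fun _ : ℕ => Lp ℂ p μ) p) (k : ℕ),
      (U (n : ℤ) ξ) k = ξ (k + n))
    (hU_neg : ∀ (n : ℕ) (ξ : lp (fun _ : ℕ => Lp ℂ p μ) p) (k : ℕ),
      (U (-(n : ℤ)) ξ) k = if n ≤ k then ξ (k - n) else 0) :
    -- (1)
    (∀ a ∈ A, ∀ n : ℕ,
      U (n : ℤ) ∘L Φ a ∘L U (-(n : ℤ)) = Φ (φ^[n] a)) ∧
    -- (2): `Θn` is `Σ_{k=0}^{n−1} θ_{δ_k,δ_k} ⊗ φ_A^{k−n}(a)`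
    (∀ a ∈ A, ∀ n : ℕ, 1 ≤ n →
      ∀ Θn : lp (fun _ : ℕ => Lp ℂ p μ) p →L[ℂ] lp (fun _ : ℕ => Lp ℂ p μ) p,
        (∀ (ξ : lp (fun _ : ℕ => Lp ℂ p μ) p) (k : ℕ),
          (Θn ξ) k = if k < n then (φ^[k] (ψ^[n] a)) (ξ k) else 0) →
        U (-(n : ℤ)) ∘L Φ a ∘L U (n : ℤ) = Φ (ψ^[n] a) - Θn) := by
  -- memberships
  have hφn : ∀ n : ℕ, ∀ a ∈ A, φ^[n] a ∈ A := by
    intro n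
    induction n with
    | zero => intro a ha; simpa using ha
    | succ n ih =>
      intro a ha
      rw [Function.iterate_succ_apply]
      exact ih _ (hφA a ha)
  have hψn : ∀ n : ℕ, ∀ a ∈ A, ψ^[n] a ∈ A := by
    intro n
    induction n with
    | zero => intro a ha; simpa using ha
    | succ n ih =>
      intro a ha
      rw [Function.iterate_succ_apply]
      exact ih _ (hψA a ha)
  have hφψn : ∀ n : ℕ, ∀ a ∈ A, φ^[n] (ψ^[n] a) = a := by
    intro n
    induction n with
    | zero => intro a _; simp
    | succ n ih =>
      intro a ha
      rw [Function.iterate_succ_apply, Function.iterate_succ_apply',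
        hφψ _ (hψn n a ha), ih a ha]
  constructor
  · intro a ha n
    ext ξ k
    simp only [ContinuousLinearMap.comp_apply]
    rw [hU_pos n _ k, hΦ a ha, hU_neg n ξ (k + n), if_pos (Nat.le_add_left n k),
      hΦ (φ^[n] a) (hφn n a ha), Nat.add_sub_cancel, ← Function.iterate_add_apply]
  · intro a ha n _ Θn hΘ
    ext ξ k
    simp only [ContinuousLinearMap.comp_apply, ContinuousLinearMap.sub_apply,
      lp.coeFn_sub, Pi.sub_apply]
    rw [hU_neg n _ k, hΦ (ψ^[n] a) (hψn n a ha), hΘ]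
    by_cases hk : n ≤ k
    · rw [if_pos hk, if_neg (not_lt.mpr hk), hΦ a ha, hU_pos n ξ (k - n),
        Nat.sub_add_cancel hk, sub_zero]
      have : φ^[k] (ψ^[n] a) = φ^[k - n] a := by
        conv_lhs => rw [show k = (k - n) + n from (Nat.sub_add_cancel hk).symm,
          Function.iterate_add_apply, hφψn n a ha]
      rw [this]
    · rw [if_neg hk, if_pos (not_le.mp hk), sub_self]
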